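/- Let n ≥ 1 and s ∈ ℕ ∪ {0}. There exists a constant C ≥ 1 such that for every ball B = B(c_B, r_B) ⊂ ℝ^n satisfying either (r_B < 1 and |c_B| ≥ 1/r_B) or r_B ≥ 1, one has C^{-1}‖χ_B‖_{L^1_{W_1}} ≤ ‖χ_B‖_{L^{Φ_1}} ≤ C‖χ_B‖_{L^1_{W_1}}; consequently, if a is a (Φ_1,∞,s)-atom associated with such a ball B, then C^{-1}a is a (1,∞,s)_{W_1}-atom associated with the same ball B. -/

import Mathlib

open MeasureTheory Real
open scoped ENNReal Classical

noncomputable section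

/-- `ℝⁿ` as a Euclidean space. -/
abbrev Rn (n : ℕ) := EuclideanSpace ℝ (Fin n)

/-- The Musielak-Orlicz growth function `Φ_p`. -/
def Phi (n : ℕ) (p : ℝ) (x : Rn n) (t : ℝ) : ℝ :=
  if ∃ k : ℕ, (n : ℝ) * (1 / p - 1) = (k : ℝ) then
    t / (Real.log (Real.exp 1 + t) +
      (t * (1 + ‖x‖) ^ (n : ℝ)) ^ (1 - p) * (Real.log (Real.exp 1 + ‖x‖)) ^ p)
  else
    t / (Real.log (Real.exp 1 + t) + (t * (1 + ‖x‖) ^ (n : ℝ)) ^ (1 - p))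

/-- The Orlicz function `φ₀(t) = t / log(e+t)`. -/
def phi0 (t : ℝ) : ℝ := t / Real.log (Real.exp 1 + t)

/-- The weight `W_p`. -/
def Wp (n : ℕ) (p : ℝ) (x : Rn n) : ℝ :=
  if p = 1 then 1 / Real.log (Real.exp 1 + ‖x‖)
  else if ∃ k : ℕ, (n : ℝ) * (1 / p - 1) = (k : ℝ) then
    (1 + ‖x‖) ^ (-(n : ℝ) * (1 - p)) * (Real.log (Real.exp 1 + ‖x‖)) ^ (-p)
  else (1 + ‖x‖) ^ (-(n : ℝ) * (1 - p))

/-- Extension of `Φ_p(x, ·)` to `ℝ≥0∞`. -/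
def PhiE (n : ℕ) (p : ℝ) (x : Rn n) (t : ℝ≥0∞) : ℝ≥0∞ :=
  if t = ⊤ then ⊤ else ENNReal.ofReal (Phi n p x t.toReal)

/-- Extension of `φ₀` to `ℝ≥0∞`. -/
def phi0E (t : ℝ≥0∞) : ℝ≥0∞ :=
  if t = ⊤ then ⊤ else ENNReal.ofReal (phi0 t.toReal)

/-- The Luxemburg quasi-norm `‖·‖_{L^{Φ_p}}`. -/
def luxPhiNorm (n : ℕ) (p : ℝ) (F : Rn n → ℝ≥0∞) : ℝ≥0∞ :=
  sInf {lam : ℝ≥0∞ | 0 < lam ∧ (∫⁻ x : Rn n, PhiE n p x (F x / lam)) ≤ 1}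

/-- The Luxemburg norm `‖·‖_{L^{φ₀}}`. -/
def luxPhi0Norm (n : ℕ) (F : Rn n → ℝ≥0∞) : ℝ≥0∞ :=
  sInf {lam : ℝ≥0∞ | 0 < lam ∧ (∫⁻ x : Rn n, phi0E (F x / lam)) ≤ 1}

/-- The weighted quasi-norm `‖·‖_{L^p_{W_p}}`. -/
def wNorm (n : ℕ) (p : ℝ) (F : Rn n → ℝ≥0∞) : ℝ≥0∞ :=
  (∫⁻ x : Rn n, F x ^ p * ENNReal.ofReal (Wp n p x)) ^ (1 / p)

/-- The weighted norm `‖·‖_{L^1_{W_1}}`. -/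
def w1Norm (n : ℕ) (F : Rn n → ℝ≥0∞) : ℝ≥0∞ :=
  ∫⁻ x : Rn n, F x * ENNReal.ofReal (Wp n 1 x)

/-- The characteristic function of a set, `ℝ≥0∞`-valued. -/
def chi (n : ℕ) (B : Set (Rn n)) : Rn n → ℝ≥0∞ := B.indicator fun _ => 1


/-- An `(X, ∞, s)`-atom associated with the set `B`, where `normB` is `‖χ_B‖_X`:
a measurable function supported in `B`, bounded by `‖χ_B‖_X⁻¹`, with vanishing
moments up to order `s`. -/
def IsAtom' (n s : ℕ) (normB : ℝ≥0∞) (B : Set (Rn n)) (a : Rn n → ℂ) : Prop :=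
  Measurable a ∧ (∀ x, x ∉ B → a x = 0) ∧
  (∀ᵐ x : Rn n, (‖a x‖₊ : ℝ≥0∞) ≤ normB⁻¹) ∧
  ∀ α : Fin n → ℕ, (∑ i, α i) ≤ s →
    (∫ x : Rn n, a x * ∏ i, ((x i : ℝ) : ℂ) ^ (α i)) = 0

set_option maxHeartbeats 1000000 in
lemma e_ge_two : (2:ℝ) ≤ Real.exp 1 := by
  have := Real.add_one_le_exp 1; linarith

lemma one_le_logE {x : ℝ} (hx : 0 ≤ x) : 1 ≤ Real.log (Real.exp 1 + x) := by
  have h := Real.log_le_log (Real.exp_pos 1) (by linarith : Real.exp 1 ≤ Real.exp 1 + x)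
  rwa [Real.log_exp] at h

lemma log_le_self' {x : ℝ} (hx : 0 < x) : Real.log x ≤ x := by
  have := Real.log_le_sub_one_of_pos hx; linarith

/-- `log (e + x*y) ≤ log (e+x) + log (e+y)` for nonneg `x y`. -/
lemma logE_mul_le {x y : ℝ} (hx : 0 ≤ x) (hy : 0 ≤ y) :
    Real.log (Real.exp 1 + x * y) ≤ Real.log (Real.exp 1 + x) + Real.log (Real.exp 1 + y) := by
  have he := Real.exp_pos 1
  have h1 : (0:ℝ) < Real.exp 1 + x * y := by positivity
  have h2 : (0:ℝ) < Real.exp 1 + x := by positivity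
  have h3 : (0:ℝ) < Real.exp 1 + y := by positivity
  have hle : Real.exp 1 + x * y ≤ (Real.exp 1 + x) * (Real.exp 1 + y) := by
    have h4 : (1:ℝ) ≤ Real.exp 1 := by nlinarith [e_ge_two]
    nlinarith
  calc Real.log (Real.exp 1 + x * y) ≤ Real.log ((Real.exp 1 + x) * (Real.exp 1 + y)) :=
        Real.log_le_log h1 hle
    _ = _ := Real.log_mul (ne_of_gt h2) (ne_of_gt h3)

/-- `log (e + x + y) ≤ log (e+x) + log (e+y)` for nonneg `x y`. -/
lemma logE_add_le {x y : ℝ} (hx : 0 ≤ x) (hy : 0 ≤ y) :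
    Real.log (Real.exp 1 + (x + y)) ≤ Real.log (Real.exp 1 + x) + Real.log (Real.exp 1 + y) := by
  have he := Real.exp_pos 1
  have h1 : (0:ℝ) < Real.exp 1 + (x + y) := by positivity
  have h2 : (0:ℝ) < Real.exp 1 + x := by positivity
  have h3 : (0:ℝ) < Real.exp 1 + y := by positivity
  have hle : Real.exp 1 + (x + y) ≤ (Real.exp 1 + x) * (Real.exp 1 + y) := by
    have h4 : (1:ℝ) ≤ Real.exp 1 := by nlinarith [e_ge_two]
    nlinarith
  calc Real.log (Real.exp 1 + (x + y)) ≤ Real.log ((Real.exp 1 + x) * (Real.exp 1 + y)) :=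
        Real.log_le_log h1 hle
    _ = _ := Real.log_mul (ne_of_gt h2) (ne_of_gt h3)

lemma expE_add_pow_le {c : ℝ} (hc : 0 ≤ c) : ∀ k : ℕ, 1 ≤ k →
    Real.exp 1 + c ^ k ≤ (Real.exp 1 + c) ^ k := by
  intro k hk
  induction k with
  | zero => omega
  | succ k ih =>
    rcases Nat.eq_or_lt_of_le hk with h | h
    · simp [← h]
    · have hk1 : 1 ≤ k := by omega
      have := ih hk1
      have he : (1:ℝ) ≤ Real.exp 1 := by nlinarith [e_ge_two]
      have hck : (0:ℝ) ≤ c ^ k := by positivity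
      calc Real.exp 1 + c ^ (k+1) = Real.exp 1 + c ^ k * c := by ring
        _ ≤ (Real.exp 1 + c) ^ k * (Real.exp 1 + c) := by nlinarith [pow_nonneg (by positivity : (0:ℝ) ≤ Real.exp 1 + c) k]
        _ = (Real.exp 1 + c) ^ (k+1) := by ring

/-- For `m ≥ 1`: `log (e+m) ≤ (log(e+1)+1) * m`. -/
lemma logE_of_ge_one {m : ℝ} (hm : 1 ≤ m) :
    Real.log (Real.exp 1 + m) ≤ (Real.log (Real.exp 1 + 1) + 1) * m := by
  have he := Real.exp_pos 1
  have h1 : Real.exp 1 + m ≤ (Real.exp 1 + 1) * m := by nlinarith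
  have h2 : Real.log (Real.exp 1 + m) ≤ Real.log ((Real.exp 1 + 1) * m) :=
    Real.log_le_log (by positivity) h1
  rw [Real.log_mul (by positivity) (by positivity)] at h2
  have h3 : Real.log m ≤ m := log_le_self' (by linarith)
  have h4 : 0 ≤ Real.log (Real.exp 1 + 1) := by
    have := one_le_logE (le_refl 0 |>.trans zero_le_one); linarith
  nlinarith

lemma scalar_bound (n : ℕ) (hn : 1 ≤ n) {v : ℝ} (hv : 0 < v) :
    ∃ K : ℝ, 0 < K ∧ ∀ c r u : ℝ, 0 ≤ c → 0 < r → 0 < u →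
      ((r < 1 ∧ 1 / r ≤ c) ∨ 1 ≤ r) →
      u * (r ^ n * v) ≤ Real.log (Real.exp 1 + u) + Real.log (Real.exp 1 + (c + r)) →
      Real.log (Real.exp 1 + u) ≤ K * Real.log (Real.exp 1 + max (c - r) 0) := by
  set e := Real.exp 1 with he_def
  have he2 : (2:ℝ) ≤ e := e_ge_two
  have he : (0:ℝ) < e := Real.exp_pos 1
  set U₁ : ℝ := e + 4 / v ^ 2 + 2 * (e + 3) / v with hU₁
  set K₂ : ℝ := e + 4 / v ^ 2 + 2 * (1 + Real.log 3) / v with hK₂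
  set K₃ : ℝ := e + 4 / v ^ 2 + 2 * (1 + Real.log 2) / v with hK₃
  have hlog3 : (0:ℝ) ≤ Real.log 3 := Real.log_nonneg (by norm_num)
  have hlog2 : (0:ℝ) ≤ Real.log 2 := Real.log_nonneg (by norm_num)
  have hU₁0 : 0 < U₁ := by positivity
  have hK₂0 : 0 < K₂ := by positivity
  have hK₃0 : 0 < K₃ := by positivity
  have hlogE_pos : ∀ x : ℝ, 0 ≤ x → 0 < Real.log (e + x) := fun x hx => by
    have := one_le_logE hx; linarith
  set A : ℝ := Real.log (e + U₁) with hA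
  set B : ℝ := Real.log (e + K₂) + (Real.log (e + 1) + 1) with hB
  set D : ℝ := Real.log (e + K₃) + (Real.log (e + 1) + 1) + 2 * n * (Real.log 2 + 1) with hD
  have hA0 : 0 < A := hlogE_pos _ hU₁0.le
  have hB0 : 0 < B := by have := hlogE_pos K₂ hK₂0.le; have := hlogE_pos 1 zero_le_one; positivity
  have hD0 : 0 < D := by have h1 := hlogE_pos K₃ hK₃0.le; have h2 := hlogE_pos 1 zero_le_one; positivity
  refine ⟨A + B + D, by positivity, ?_⟩
  intro c r u hc hr hu hgeo hineq
  set M : ℝ := Real.log (e + (c + r)) with hM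
  set m : ℝ := Real.log (e + max (c - r) 0) with hm
  have hm1 : 1 ≤ m := one_le_logE (le_max_right _ _)
  have hM1 : 1 ≤ M := one_le_logE (by positivity)
  set a : ℝ := r ^ n * v with ha
  have ha0 : 0 < a := by positivity
  -- Step A : u ≤ e + 4/a² + 2M/a
  have hstepA : u ≤ e + 4 / a ^ 2 + 2 * M / a := by
    have h1 : Real.log ((e + u) * (a / 2)) ≤ (e + u) * (a / 2) - 1 :=
      Real.log_le_sub_one_of_pos (by positivity)
    have h2 : Real.log ((e + u) * (a / 2)) = Real.log (e + u) + Real.log (a / 2) :=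
      Real.log_mul (by positivity) (by positivity)
    have h3 : Real.log (a / 2) = - Real.log (2 / a) := by
      rw [← Real.log_inv]; congr 1; field_simp
    have h4 : Real.log (2 / a) ≤ 2 / a := log_le_self' (by positivity)
    have h5 : Real.log (e + u) ≤ (e + u) * (a / 2) + 2 / a := by
      rw [h3] at h2; linarith only [h1, h2, h4]
    have h6 : u * a / 2 ≤ e * a / 2 + 2 / a + M := by
      linarith only [hineq, h5]
    calc u = (u * a / 2) * (2 / a) := by field_simp
      _ ≤ (e * a / 2 + 2 / a + M) * (2 / a) :=
          mul_le_mul_of_nonneg_right h6 (by positivity)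
      _ = e + 4 / a ^ 2 + 2 * M / a := by field_simp; ring
  have hgoal_of : ∀ G : ℝ, 0 < G → G ≤ A + B + D → Real.log (e + u) ≤ G * m →
      Real.log (e + u) ≤ (A + B + D) * m := by
    intro G hG hGle h
    have : G * m ≤ (A + B + D) * m :=
      mul_le_mul_of_nonneg_right hGle (by linarith only [hm1])
    linarith only [h, this]
  rcases hgeo with ⟨hr1, hrc⟩ | hr1
  · -- Case : r < 1 ∧ 1/r ≤ c
    have hc1 : 1 < c := by
      have : 1 < 1 / r := by rw [lt_div_iff₀ hr]; linarith
      linarith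
    have hcr0 : 0 ≤ c - r := by linarith
    have hmax : max (c - r) 0 = c - r := max_eq_left hcr0
    have hmm : m = Real.log (e + (c - r)) := by rw [hm, hmax]
    have hrc' : 1 / c ≤ r := by
      rw [div_le_iff₀ (by linarith : (0:ℝ) < c)]
      rw [div_le_iff₀ hr] at hrc; linarith only [hrc]
    have hcn : (0:ℝ) < c ^ n := by positivity
    have hia : 1 / a ≤ c ^ n / v := by
      have h1 : (1 / c) ^ n ≤ r ^ n := pow_le_pow_left₀ (by positivity) hrc' n
      have h1' : 1 / c ^ n ≤ r ^ n := by rwa [div_pow, one_pow] at h1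
      rw [div_le_div_iff₀ ha0 hv, ha]
      calc 1 * v = (1 / c ^ n) * (c ^ n * v) := by field_simp
        _ ≤ r ^ n * (c ^ n * v) :=
            mul_le_mul_of_nonneg_right h1' (by positivity)
        _ = c ^ n * (r ^ n * v) := by ring
    have hM_le : M ≤ (1 + Real.log 2) * m := by
      have h1 : e + (c + r) ≤ 2 * (e + (c - r)) := by linarith only [hr1, hc1, he2]
      have h2 : M ≤ Real.log (2 * (e + (c - r))) :=
        Real.log_le_log (by positivity) h1
      rw [Real.log_mul (by norm_num) (show (0:ℝ) < e + (c - r) by linarith only [he, hcr0]).ne', ← hmm] at h2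
      have p : Real.log 2 ≤ Real.log 2 * m := le_mul_of_one_le_right hlog2 hm1
      linarith only [h2, p]
    have hQ : (1:ℝ) ≤ c ^ (2 * n) := one_le_pow₀ hc1.le
    have hQmc : (1:ℝ) ≤ m * c ^ (2 * n) := by
      calc (1:ℝ) = 1 * 1 := by ring
        _ ≤ m * c ^ (2 * n) := mul_le_mul hm1 hQ zero_le_one (by linarith only [hm1])
    have hcnn : c ^ n ≤ c ^ (2 * n) := pow_le_pow_right₀ hc1.le (by omega)
    have h4a : 4 / a ^ 2 ≤ 4 * c ^ (2 * n) / v ^ 2 := by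
      have h1' : (1 / a) ^ 2 ≤ (c ^ n / v) ^ 2 := pow_le_pow_left₀ (by positivity) hia 2
      calc 4 / a ^ 2 = 4 * (1 / a) ^ 2 := by field_simp
        _ ≤ 4 * (c ^ n / v) ^ 2 := by linarith only [h1']
        _ = 4 * c ^ (2 * n) / v ^ 2 := by rw [div_pow, ← pow_mul]; ring
    have h4b : 2 * M / a ≤ (2 * (1 + Real.log 2) / v) * (m * c ^ n) := by
      have h1 : M * (1 / a) ≤ ((1 + Real.log 2) * m) * (c ^ n / v) :=
        mul_le_mul hM_le hia (by positivity) (by positivity)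
      calc 2 * M / a = 2 * (M * (1 / a)) := by ring
        _ ≤ 2 * (((1 + Real.log 2) * m) * (c ^ n / v)) := by linarith only [h1]
        _ = (2 * (1 + Real.log 2) / v) * (m * c ^ n) := by ring
    have hu_le : u ≤ K₃ * (m * c ^ (2 * n)) := by
      have t1 : e ≤ e * (m * c ^ (2 * n)) := le_mul_of_one_le_right he.le hQmc
      have t2 : 4 * c ^ (2 * n) / v ^ 2 ≤ (4 / v ^ 2) * (m * c ^ (2 * n)) := by
        rw [show (4:ℝ) * c ^ (2*n) / v ^ 2 = (4 / v ^ 2) * c ^ (2*n) from by ring,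
          show (4 / v ^ 2) * (m * c ^ (2*n)) = (4 / v ^ 2) * c ^ (2*n) * m from by ring]
        exact le_mul_of_one_le_right (by positivity) hm1
      have t3 : (2 * (1 + Real.log 2) / v) * (m * c ^ n) ≤
          (2 * (1 + Real.log 2) / v) * (m * c ^ (2 * n)) := by
        apply mul_le_mul_of_nonneg_left _ (by positivity)
        exact mul_le_mul_of_nonneg_left hcnn (by linarith only [hm1])
      calc u ≤ e + 4 / a ^ 2 + 2 * M / a := hstepA
        _ ≤ e * (m * c ^ (2*n)) + (4 / v ^ 2) * (m * c ^ (2*n))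
            + (2 * (1 + Real.log 2) / v) * (m * c ^ (2*n)) := by
            linarith only [t1, t2, t3, h4a, h4b]
        _ = K₃ * (m * c ^ (2 * n)) := by rw [hK₃]; ring
    have l1 : Real.log (e + u) ≤ Real.log (e + K₃ * (m * c ^ (2 * n))) :=
      Real.log_le_log (by positivity) (by linarith only [hu_le])
    have l2 : Real.log (e + K₃ * (m * c ^ (2 * n))) ≤
        Real.log (e + K₃) + Real.log (e + m * c ^ (2 * n)) :=
      logE_mul_le hK₃0.le (by positivity)
    have l3 : Real.log (e + m * c ^ (2 * n)) ≤
        Real.log (e + m) + Real.log (e + c ^ (2 * n)) :=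
      logE_mul_le (by linarith only [hm1]) (by positivity)
    have l4 : Real.log (e + m) ≤ (Real.log (e + 1) + 1) * m := logE_of_ge_one hm1
    have l5 : Real.log (e + c ^ (2 * n)) ≤ (2 * (n:ℝ)) * Real.log (e + c) := by
      have p1 := expE_add_pow_le hc (2 * n) (by omega)
      have p2 := Real.log_le_log (by positivity) p1
      rw [Real.log_pow] at p2
      push_cast at p2
      linarith only [p2]
    have l6 : Real.log (e + c) ≤ (Real.log 2 + 1) * m := by
      have h1 : e + c ≤ 2 * (e + (c - r)) := by linarith only [hr1, he2, hc]
      have h2 : Real.log (e + c) ≤ Real.log (2 * (e + (c - r))) :=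
        Real.log_le_log (by positivity) h1
      rw [Real.log_mul (by norm_num) (show (0:ℝ) < e + (c - r) by linarith only [he, hcr0]).ne', ← hmm] at h2
      have p : Real.log 2 ≤ Real.log 2 * m := le_mul_of_one_le_right hlog2 hm1
      linarith only [h2, p]
    have l7 : Real.log (e + K₃) ≤ Real.log (e + K₃) * m :=
      le_mul_of_one_le_right (hlogE_pos K₃ hK₃0.le).le hm1
    apply hgoal_of D hD0 (by linarith only [hA0, hB0])
    have l8 : (2 * (n:ℝ)) * Real.log (e + c) ≤ (2 * (n:ℝ)) * ((Real.log 2 + 1) * m) :=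
      mul_le_mul_of_nonneg_left l6 (by positivity)
    rw [hD]
    linarith only [l1, l2, l3, l4, l5, l7, l8]
  · -- Case : 1 ≤ r
    have hrn : (1:ℝ) ≤ r ^ n := one_le_pow₀ hr1
    have hav : v ≤ a := by rw [ha]; exact le_mul_of_one_le_left hv.le hrn
    have h4a : 4 / a ^ 2 ≤ 4 / v ^ 2 := by
      rw [div_le_div_iff₀ (by positivity) (by positivity)]
      have : v ^ 2 ≤ a ^ 2 := pow_le_pow_left₀ hv.le hav 2
      linarith only [this]
    rcases le_or_gt c (2 * r) with hc2 | hc2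
    · -- c ≤ 2r
      have har : r * v ≤ a := by
        have h1 : r ≤ r ^ n := by
          calc r = r ^ 1 := (pow_one r).symm
            _ ≤ r ^ n := pow_le_pow_right₀ hr1 hn
        rw [ha]; exact mul_le_mul_of_nonneg_right h1 hv.le
      have hM3 : M ≤ (e + 3) * r := by
        have h1 : M ≤ Real.log (e + 3 * r) :=
          Real.log_le_log (by positivity) (by linarith only [hc2])
        have h2 : Real.log (e + 3 * r) ≤ e + 3 * r := log_le_self' (by positivity)
        have h3 : e ≤ e * r := le_mul_of_one_le_right he.le hr1
        linarith only [h1, h2, h3]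
      have h2Ma : 2 * M / a ≤ 2 * (e + 3) / v := by
        rw [div_le_div_iff₀ ha0 hv]
        have p1 : M * v ≤ ((e + 3) * r) * v :=
          mul_le_mul_of_nonneg_right hM3 hv.le
        have p2 : (e + 3) * (r * v) ≤ (e + 3) * a :=
          mul_le_mul_of_nonneg_left har (by positivity)
        linarith only [p1, p2]
      have huU : u ≤ U₁ := by rw [hU₁]; linarith only [hstepA, h4a, h2Ma]
      have l1 : Real.log (e + u) ≤ A := by
        rw [hA]; exact Real.log_le_log (by positivity) (by linarith only [huU])
      apply hgoal_of A hA0 (by linarith only [hB0, hD0])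
      have : A ≤ A * m := le_mul_of_one_le_right hA0.le hm1
      linarith only [l1, this]
    · -- 2r < c
      have hcr0 : 0 ≤ c - r := by linarith
      have hmax : max (c - r) 0 = c - r := max_eq_left hcr0
      have hmm : m = Real.log (e + (c - r)) := by rw [hm, hmax]
      have hM_le : M ≤ (1 + Real.log 3) * m := by
        have h1 : e + (c + r) ≤ 3 * (e + (c - r)) := by linarith only [hc2, hc, he]
        have h2 : M ≤ Real.log (3 * (e + (c - r))) :=
          Real.log_le_log (by positivity) h1
        rw [Real.log_mul (by norm_num) (show (0:ℝ) < e + (c - r) by linarith only [he, hcr0]).ne', ← hmm] at h2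
        have p : Real.log 3 ≤ Real.log 3 * m := le_mul_of_one_le_right hlog3 hm1
        linarith only [h2, p]
      have hu_le : u ≤ K₂ * m := by
        have t1 : e ≤ e * m := le_mul_of_one_le_right he.le hm1
        have t2 : 4 / v ^ 2 ≤ (4 / v ^ 2) * m :=
          le_mul_of_one_le_right (by positivity) hm1
        have t3 : 2 * M / a ≤ 2 * ((1 + Real.log 3) * m) / v := by
          calc 2 * M / a ≤ 2 * M / v := by
                apply div_le_div_of_nonneg_left _ hv hav
                linarith only [hM1]
            _ ≤ 2 * ((1 + Real.log 3) * m) / v := by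
                gcongr
        calc u ≤ e + 4 / a ^ 2 + 2 * M / a := hstepA
          _ ≤ e * m + (4 / v ^ 2) * m + 2 * ((1 + Real.log 3) * m) / v := by
              linarith only [t1, t2, t3, h4a, hstepA]
          _ = K₂ * m := by rw [hK₂]; ring
      have l1 : Real.log (e + u) ≤ Real.log (e + K₂ * m) :=
        Real.log_le_log (by positivity) (by linarith only [hu_le])
      have l2 : Real.log (e + K₂ * m) ≤ Real.log (e + K₂) + Real.log (e + m) :=
        logE_mul_le hK₂0.le (by linarith only [hm1])
      have l4 : Real.log (e + m) ≤ (Real.log (e + 1) + 1) * m := logE_of_ge_one hm1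
      have l7 : Real.log (e + K₂) ≤ Real.log (e + K₂) * m :=
        le_mul_of_one_le_right (hlogE_pos K₂ hK₂0.le).le hm1
      apply hgoal_of B hB0 (by linarith only [hA0, hD0])
      rw [hB]
      linarith only [l1, l2, l4, l7]

lemma Phi_one_eq (n : ℕ) (x : Rn n) (t : ℝ) :
    Phi n 1 x t = t / (Real.log (Real.exp 1 + t) + Real.log (Real.exp 1 + ‖x‖)) := by
  unfold Phi
  rw [if_pos ⟨0, by norm_num⟩]
  norm_num

lemma PhiE_one_eq (n : ℕ) (x : Rn n) (t : ℝ≥0∞) (ht : t ≠ ⊤) :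
    PhiE n 1 x t =
      ENNReal.ofReal (t.toReal / (Real.log (Real.exp 1 + t.toReal) + Real.log (Real.exp 1 + ‖x‖))) := by
  rw [PhiE, if_neg ht, Phi_one_eq]

lemma Wp_one_eq (n : ℕ) (x : Rn n) : Wp n 1 x = 1 / Real.log (Real.exp 1 + ‖x‖) := by
  rw [Wp, if_pos rfl]

set_option maxHeartbeats 1000000 in
/-- For balls with `r_B < 1 ≤ |c_B| r_B`, or `r_B ≥ 1`,
`‖χ_B‖_{L^{Φ_1}} ∼ ‖χ_B‖_{L^1_{W_1}}`; consequently every `(Φ_1,∞,s)`-atom on such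
a ball is, up to a uniform constant, a `(1,∞,s)_{W_1}`-atom. -/
theorem statement12 (n s : ℕ) (hn : 1 ≤ n) :
    ∃ C : ℝ, 1 ≤ C ∧ ∀ (c : Rn n) (r : ℝ), 0 < r →
      ((r < 1 ∧ 1 / r ≤ ‖c‖) ∨ 1 ≤ r) →
      (ENNReal.ofReal C⁻¹ * w1Norm n (chi n (Metric.ball c r)) ≤
          luxPhiNorm n 1 (chi n (Metric.ball c r)) ∧
        luxPhiNorm n 1 (chi n (Metric.ball c r)) ≤
          ENNReal.ofReal C * w1Norm n (chi n (Metric.ball c r))) ∧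
      ∀ a : Rn n → ℂ,
        IsAtom' n s (luxPhiNorm n 1 (chi n (Metric.ball c r))) (Metric.ball c r) a →
        IsAtom' n s (w1Norm n (chi n (Metric.ball c r))) (Metric.ball c r)
          (fun x => (C : ℂ)⁻¹ * a x) := by
  have hV0' : (0:ℝ≥0∞) < volume (Metric.ball (0 : Rn n) 1) :=
    Metric.measure_ball_pos _ _ one_pos
  have hVtop' : volume (Metric.ball (0 : Rn n) 1) ≠ ⊤ := measure_ball_lt_top.ne
  have hv' : 0 < (volume (Metric.ball (0 : Rn n) 1)).toReal :=
    ENNReal.toReal_pos hV0'.ne' hVtop'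
  obtain ⟨K, hK0, hK⟩ := scalar_bound n hn hv'
  refine ⟨K + 1, by linarith, ?_⟩
  intro c r hr hgeo

  have hV0 : (0:ℝ≥0∞) < volume (Metric.ball (0 : Rn n) 1) :=
    Metric.measure_ball_pos _ _ one_pos
  have hVtop : volume (Metric.ball (0 : Rn n) 1) ≠ ⊤ := measure_ball_lt_top.ne
  set v : ℝ := (volume (Metric.ball (0 : Rn n) 1)).toReal with hv_def
  have hv : 0 < v := ENNReal.toReal_pos hV0.ne' hVtop
  set Bs := Metric.ball c r with hBs
  set L : Rn n → ℝ := fun x => Real.log (Real.exp 1 + ‖x‖) with hL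
  have hL1 : ∀ x, 1 ≤ L x := fun x => one_le_logE (norm_nonneg x)
  set M : ℝ := Real.log (Real.exp 1 + (‖c‖ + r)) with hMdef
  set mm : ℝ := Real.log (Real.exp 1 + max (‖c‖ - r) 0) with hmm
  have hM1 : 1 ≤ M := one_le_logE (by positivity)
  have hm1 : 1 ≤ mm := one_le_logE (le_max_right _ _)
  have hLM : ∀ x ∈ Bs, L x ≤ M := by
    intro x hx
    have h1 : ‖x - c‖ < r := mem_ball_iff_norm.mp hx
    have h2 : ‖x‖ ≤ ‖c‖ + ‖x - c‖ := by
      calc ‖x‖ = ‖c + (x - c)‖ := by rw [add_sub_cancel]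
        _ ≤ ‖c‖ + ‖x - c‖ := norm_add_le _ _
    exact Real.log_le_log (by positivity) (by linarith)
  have hmL : ∀ x ∈ Bs, mm ≤ L x := by
    intro x hx
    have h1 : ‖x - c‖ < r := mem_ball_iff_norm.mp hx
    have h2 : ‖c‖ - ‖x‖ ≤ ‖x - c‖ := by
      have := norm_sub_norm_le c x
      rwa [norm_sub_rev c x] at this
    apply Real.log_le_log (by positivity)
    have : max (‖c‖ - r) 0 ≤ ‖x‖ := by
      apply max_le (by linarith) (norm_nonneg x)
    linarith
  haveI : Nontrivial (Rn n) := by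
    have h : 0 < Module.finrank ℝ (Rn n) := by rw [finrank_euclideanSpace_fin]; omega
    exact Module.nontrivial_of_finrank_pos h
  -- measure of the ball
  have hvol : volume Bs = ENNReal.ofReal (r ^ n) * volume (Metric.ball (0 : Rn n) 1) := by
    rw [hBs, Measure.addHaar_ball volume c hr.le, finrank_euclideanSpace_fin]
  have hB0 : 0 < volume Bs := Metric.measure_ball_pos _ _ hr
  have hBtop : volume Bs ≠ ⊤ := measure_ball_lt_top.ne
  set b : ℝ := (volume Bs).toReal with hbdef
  have hb : b = r ^ n * v := by
    rw [hbdef, hvol, ENNReal.toReal_mul, ENNReal.toReal_ofReal (by positivity)]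
  have hb0 : 0 < b := ENNReal.toReal_pos hB0.ne' hBtop
  have hBvol : volume Bs = ENNReal.ofReal b := (ENNReal.ofReal_toReal hBtop).symm
  -- rewrite of w1Norm
  have hI_eq : w1Norm n (chi n Bs) = ∫⁻ x in Bs, ENNReal.ofReal (1 / L x) := by
    rw [w1Norm, ← lintegral_indicator measurableSet_ball]
    congr 1; funext x
    by_cases hx : x ∈ Bs
    · simp [chi, Set.indicator_of_mem hx, Set.indicator_of_mem (show x ∈ Metric.ball c r from hx), Wp_one_eq, hL]
    · simp [chi, Set.indicator_of_notMem hx, Set.indicator_of_notMem (show x ∉ Metric.ball c r from hx)]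
  set I := w1Norm n (chi n Bs) with hIdef
  have hI_ub : I ≤ volume Bs := by
    rw [hI_eq]
    calc ∫⁻ x in Bs, ENNReal.ofReal (1 / L x) ≤ ∫⁻ _x in Bs, 1 :=
          setLIntegral_mono' measurableSet_ball (fun x _ => by
            rw [← ENNReal.ofReal_one]
            apply ENNReal.ofReal_le_ofReal
            rw [div_le_one (by linarith [hL1 x])]
            exact hL1 x)
      _ = volume Bs := setLIntegral_one _
  have hI_lb : ENNReal.ofReal (1 / M) * volume Bs ≤ I := by
    rw [hI_eq, ← setLIntegral_const Bs]
    apply setLIntegral_mono' measurableSet_ball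
    intro x hx
    apply ENNReal.ofReal_le_ofReal
    apply div_le_div_of_nonneg_left zero_le_one (by linarith [hL1 x]) (hLM x hx)
  have hI0 : 0 < I := by
    refine lt_of_lt_of_le ?_ hI_lb
    apply ENNReal.mul_pos _ hB0.ne'
    exact (ENNReal.ofReal_pos.mpr (by positivity)).ne'
  have hItop : I ≠ ⊤ := (lt_of_le_of_lt hI_ub measure_ball_lt_top).ne
  -- rewrite of the Luxemburg integral
  have hint : ∀ lam : ℝ≥0∞,
      (∫⁻ x, PhiE n 1 x (chi n Bs x / lam)) = ∫⁻ x in Bs, PhiE n 1 x (1 / lam) := by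
    intro lam
    rw [← lintegral_indicator measurableSet_ball]
    congr 1; funext x
    by_cases hx : x ∈ Bs
    · simp [chi, Set.indicator_of_mem hx, Set.indicator_of_mem (show x ∈ Metric.ball c r from hx)]
    · simp [chi, Set.indicator_of_notMem hx, Set.indicator_of_notMem (show x ∉ Metric.ball c r from hx), ENNReal.zero_div, PhiE, Phi_one_eq]
  -- upper bound : lux ≤ I
  have hlux_le : luxPhiNorm n 1 (chi n Bs) ≤ I := by
    rw [luxPhiNorm]
    apply sInf_le
    refine ⟨hI0, ?_⟩
    rw [hint I]
    have hfin : (1:ℝ≥0∞) / I ≠ ⊤ := by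
      rw [one_div]; exact ENNReal.inv_ne_top.mpr hI0.ne'
    have hIr : 0 < I.toReal := ENNReal.toReal_pos hI0.ne' hItop
    have htoR : ((1:ℝ≥0∞) / I).toReal = I.toReal⁻¹ := by
      rw [one_div, ENNReal.toReal_inv]
    calc ∫⁻ x in Bs, PhiE n 1 x (1 / I)
        ≤ ∫⁻ x in Bs, ENNReal.ofReal I.toReal⁻¹ * ENNReal.ofReal (1 / L x) := by
          apply setLIntegral_mono' measurableSet_ball
          intro x hx
          rw [PhiE_one_eq n x _ hfin, htoR, ← ENNReal.ofReal_mul (by positivity), mul_one_div]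
          apply ENNReal.ofReal_le_ofReal
          apply div_le_div_of_nonneg_left (by positivity) (by linarith [hL1 x])
          have := one_le_logE (le_of_lt (inv_pos.mpr hIr))
          linarith
      _ = ENNReal.ofReal I.toReal⁻¹ * ∫⁻ x in Bs, ENNReal.ofReal (1 / L x) :=
          lintegral_const_mul' _ _ ENNReal.ofReal_ne_top
      _ = ENNReal.ofReal I.toReal⁻¹ * I := by rw [← hI_eq]
      _ = 1 := by
          rw [ENNReal.ofReal_inv_of_pos hIr, ENNReal.ofReal_toReal hItop,
            ENNReal.inv_mul_cancel hI0.ne' hItop]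
  -- main estimate : I ≤ (K+1) * lam for lam in the defining set
  have hmain : ∀ lam : ℝ≥0∞, 0 < lam → (∫⁻ x, PhiE n 1 x (chi n Bs x / lam)) ≤ 1 →
      I ≤ ENNReal.ofReal (K + 1) * lam := by
    intro lam hlam0 hlam
    rcases eq_or_ne lam ⊤ with htop | hltop
    · rw [htop, ENNReal.mul_top (ENNReal.ofReal_pos.mpr (by linarith)).ne']
      exact le_top
    set lr := lam.toReal with hlr
    have hlr0 : 0 < lr := ENNReal.toReal_pos hlam0.ne' hltop
    set u : ℝ := lr⁻¹ with hu
    have hu0 : 0 < u := inv_pos.mpr hlr0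
    have hfin : (1:ℝ≥0∞) / lam ≠ ⊤ := by
      rw [one_div]; exact ENNReal.inv_ne_top.mpr hlam0.ne'
    have htoR : ((1:ℝ≥0∞) / lam).toReal = u := by
      rw [one_div, ENNReal.toReal_inv, hu, hlr]
    rw [hint lam] at hlam
    have hPhiE : ∀ x : Rn n, PhiE n 1 x (1 / lam) =
        ENNReal.ofReal (u / (Real.log (Real.exp 1 + u) + L x)) := by
      intro x
      rw [PhiE_one_eq n x _ hfin, htoR]
    have hlogu : 1 ≤ Real.log (Real.exp 1 + u) := one_le_logE hu0.le
    have hdenM : 0 < Real.log (Real.exp 1 + u) + M := by linarith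
    -- inequality (a)
    have ha : u * (r ^ n * v) ≤ Real.log (Real.exp 1 + u) + M := by
      have h1 : ENNReal.ofReal (u / (Real.log (Real.exp 1 + u) + M)) * volume Bs ≤ 1 := by
        rw [← setLIntegral_const Bs]
        refine le_trans (setLIntegral_mono' measurableSet_ball ?_) hlam
        intro x hx
        rw [hPhiE x]
        apply ENNReal.ofReal_le_ofReal
        apply div_le_div_of_nonneg_left hu0.le (by linarith [hL1 x]) (by linarith [hLM x hx])
      rw [hBvol, ← ENNReal.ofReal_mul (by positivity)] at h1
      have h2 := ENNReal.ofReal_le_one.mp h1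
      rw [div_mul_eq_mul_div, div_le_one hdenM] at h2
      rw [← hb]; linarith
    have hKm : Real.log (Real.exp 1 + u) ≤ K * mm := by
      rw [hmm]
      exact hK ‖c‖ r u (norm_nonneg c) hr hu0 hgeo ha
    -- inequality (b)
    have hbI : ENNReal.ofReal (u / (K + 1)) * I ≤ 1 := by
      rw [hI_eq, ← lintegral_const_mul' _ _ ENNReal.ofReal_ne_top]
      refine le_trans (setLIntegral_mono' measurableSet_ball ?_) hlam
      intro x hx
      rw [hPhiE x, ← ENNReal.ofReal_mul (by positivity), mul_one_div, div_div]
      apply ENNReal.ofReal_le_ofReal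
      apply div_le_div_of_nonneg_left hu0.le (by linarith [hL1 x])
      have h3 : K * mm ≤ K * L x := mul_le_mul_of_nonneg_left (hmL x hx) hK0.le
      have h4 := hL1 x
      nlinarith [hKm]
    have hc0 : ENNReal.ofReal (u / (K + 1)) ≠ 0 :=
      (ENNReal.ofReal_pos.mpr (by positivity)).ne'
    calc I ≤ (ENNReal.ofReal (u / (K + 1)))⁻¹ :=
          ENNReal.le_inv_iff_mul_le.mpr (by rwa [mul_comm])
      _ = ENNReal.ofReal ((u / (K + 1))⁻¹) := (ENNReal.ofReal_inv_of_pos (by positivity)).symm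
      _ = ENNReal.ofReal ((K + 1) * lr) := by
          congr 1
          rw [hu]; field_simp
      _ = ENNReal.ofReal (K + 1) * ENNReal.ofReal lr := ENNReal.ofReal_mul (by linarith)
      _ = ENNReal.ofReal (K + 1) * lam := by rw [hlr, ENNReal.ofReal_toReal hltop]
  have hpair_low : ENNReal.ofReal (K+1)⁻¹ * w1Norm n (chi n Bs) ≤ luxPhiNorm n 1 (chi n Bs) := by
    -- lower bound
    rw [luxPhiNorm]
    apply le_sInf
    rintro lam ⟨hlam0, hlam⟩
    have h1 := hmain lam hlam0 hlam
    calc ENNReal.ofReal (K+1)⁻¹ * I ≤ ENNReal.ofReal (K+1)⁻¹ * (ENNReal.ofReal (K+1) * lam) :=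
          mul_le_mul_right h1 _
      _ = (ENNReal.ofReal (K+1)⁻¹ * ENNReal.ofReal (K+1)) * lam := (mul_assoc _ _ _).symm
      _ = ENNReal.ofReal ((K+1)⁻¹ * (K+1)) * lam := by
          rw [← ENNReal.ofReal_mul (by positivity)]
      _ = lam := by
          rw [inv_mul_cancel₀ (by linarith : K + 1 ≠ 0), ENNReal.ofReal_one, one_mul]
  have hpair_up : luxPhiNorm n 1 (chi n Bs) ≤ ENNReal.ofReal (K+1) * w1Norm n (chi n Bs) := by
    refine hlux_le.trans ?_
    apply le_mul_of_one_le_left (by positivity)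
    rw [ENNReal.one_le_ofReal]; linarith
  refine ⟨⟨hpair_low, hpair_up⟩, ?_⟩
  rintro a ⟨hameas, hasupp, habound, hamom⟩
  have hCpos : (0:ℝ) < K + 1 := by linarith
  have hofC0 : ENNReal.ofReal ((K+1)⁻¹) ≠ 0 := (ENNReal.ofReal_pos.mpr (by positivity)).ne'
  have hofCtop : ENNReal.ofReal ((K+1)⁻¹) ≠ ⊤ := ENNReal.ofReal_ne_top
  refine ⟨hameas.const_mul _, ?_, ?_, ?_⟩
  · intro x hx
    simp [hasupp x hx]
  · filter_upwards [habound] with x hx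
    have hnorm : (‖((K+1:ℝ):ℂ)⁻¹ * a x‖₊ : ℝ≥0∞) = ENNReal.ofReal ((K+1)⁻¹) * ‖a x‖₊ := by
      rw [nnnorm_mul, ENNReal.coe_mul]
      congr 1
      rw [← Complex.ofReal_inv, Complex.nnnorm_real]
      exact Real.enorm_eq_ofReal (by positivity)
    have hstep : (luxPhiNorm n 1 (chi n Bs))⁻¹ ≤ (ENNReal.ofReal ((K+1)⁻¹))⁻¹ * (w1Norm n (chi n Bs))⁻¹ := by
      calc (luxPhiNorm n 1 (chi n Bs))⁻¹
          ≤ (ENNReal.ofReal ((K+1)⁻¹) * w1Norm n (chi n Bs))⁻¹ := ENNReal.inv_le_inv' hpair_low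
        _ = (ENNReal.ofReal ((K+1)⁻¹))⁻¹ * (w1Norm n (chi n Bs))⁻¹ :=
            ENNReal.mul_inv (Or.inl hofC0) (Or.inl hofCtop)
    calc (‖((K+1:ℝ):ℂ)⁻¹ * a x‖₊ : ℝ≥0∞)
        = ENNReal.ofReal ((K+1)⁻¹) * ‖a x‖₊ := hnorm
      _ ≤ ENNReal.ofReal ((K+1)⁻¹) * (luxPhiNorm n 1 (chi n Bs))⁻¹ := mul_le_mul_right hx _
      _ ≤ ENNReal.ofReal ((K+1)⁻¹) * ((ENNReal.ofReal ((K+1)⁻¹))⁻¹ * (w1Norm n (chi n Bs))⁻¹) :=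
          mul_le_mul_right hstep _
      _ = (ENNReal.ofReal ((K+1)⁻¹) * (ENNReal.ofReal ((K+1)⁻¹))⁻¹) * (w1Norm n (chi n Bs))⁻¹ :=
          (mul_assoc _ _ _).symm
      _ = (w1Norm n (chi n Bs))⁻¹ := by
          rw [ENNReal.mul_inv_cancel hofC0 hofCtop, one_mul]
  · intro α hα
    have h0 := hamom α hα
    simp only [mul_assoc]
    rw [integral_const_mul, h0, mul_zero]
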